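/- Define η(y, θ) for y ∈ ℤ≥0 and θ ∈ ℝ by η(0, θ) = 1 − σ(c + θ) and η(y, θ) = σ(c + θ) e^{−λ(d+θ)} λ(d+θ)^{y−1} / (y−1)! for y ≥ 1, where σ(x) = (1 + e^{−x})^{−1} is the logistic function and λ : ℝ → ℝ_{>0} is differentiable and nondecreasing with 0 ≤ λ'(d+θ) ≤ 1 for all θ. Then for every y ∈ ℤ≥0, the ratio θ ↦ η(y+1, θ)/η(y, θ) is nondecreasing in θ; consequently η is TP₂ in (y, θ). -/

import Mathlib

open Real

noncomputable def logistic (x : ℝ) : ℝ := (1 + Real.exp (-x))⁻¹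

lemma logistic_pos (x : ℝ) : 0 < logistic x := by
  unfold logistic
  positivity

lemma logistic_lt_one (x : ℝ) : logistic x < 1 := by
  unfold logistic
  rw [inv_lt_one_iff₀]
  right
  linarith [Real.exp_pos (-x)]

lemma one_sub_logistic (x : ℝ) : 1 - logistic x = Real.exp (-x) * logistic x := by
  unfold logistic
  have h : (1 : ℝ) + Real.exp (-x) ≠ 0 := by positivity
  field_simp
  ring

/-- Poisson–hurdle single-period kernel: if `0 ≤ λ'(d+θ) ≤ 1` for all `θ`, then
for every `y` the ratio `θ ↦ η(y+1,θ)/η(y,θ)` is nondecreasing in `θ`;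
consequently `η` is TP₂ in `(y, θ)`. -/
theorem hurdle_kernel_TP2
    (c d : ℝ) (lam : ℝ → ℝ) (hpos : ∀ x, 0 < lam x)
    (hdiff : Differentiable ℝ lam)
    (hd0 : ∀ θ : ℝ, 0 ≤ deriv lam (d + θ))
    (hd1 : ∀ θ : ℝ, deriv lam (d + θ) ≤ 1)
    (η : ℕ → ℝ → ℝ)
    (hη0 : ∀ θ : ℝ, η 0 θ = 1 - logistic (c + θ))
    (hη1 : ∀ (y : ℕ) (θ : ℝ), η (y + 1) θ =
      logistic (c + θ) * Real.exp (-(lam (d + θ))) * (lam (d + θ)) ^ y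
        / (Nat.factorial y)) :
    (∀ y : ℕ, Monotone (fun θ : ℝ => η (y + 1) θ / η y θ)) ∧
    (∀ (y y' : ℕ) (θ θ' : ℝ), y ≤ y' → θ ≤ θ' →
      η y θ * η y' θ' ≥ η y θ' * η y' θ) := by
  -- positivity of η
  have ηpos : ∀ (y : ℕ) (θ : ℝ), 0 < η y θ := by
    intro y θ
    cases y with
    | zero =>
      rw [hη0]
      linarith [logistic_lt_one (c + θ)]
    | succ n =>
      rw [hη1]
      have := logistic_pos (c + θ)
      have := Real.exp_pos (-(lam (d + θ)))
      have := pow_pos (hpos (d + θ)) n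
      have : (0:ℝ) < (Nat.factorial n : ℝ) := by positivity
      positivity
  -- lam is monotone
  have lam_mono : Monotone lam := by
    apply monotone_of_deriv_nonneg hdiff
    intro x
    have := hd0 (x - d)
    simpa using this
  -- the exponent function is monotone
  have gmono : Monotone (fun θ : ℝ => c + θ - lam (d + θ)) := by
    apply monotone_of_deriv_nonneg
    · intro θ
      exact ((differentiable_const c).add differentiable_id).sub
        (hdiff.comp ((differentiable_const d).add differentiable_id)) |>.differentiableAt
    · intro θ
      have h1 : HasDerivAt (fun θ : ℝ => lam (d + θ)) (deriv lam (d + θ) * 1) θ :=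
        ((hdiff (d + θ)).hasDerivAt).comp θ ((hasDerivAt_id θ).const_add d)
      have h2 : HasDerivAt (fun θ : ℝ => c + θ - lam (d + θ))
          (1 - deriv lam (d + θ) * 1) θ :=
        ((hasDerivAt_id θ).const_add c).sub h1
      rw [h2.deriv]
      have := hd1 θ
      linarith
  -- ratio formulas
  have ratio0 : ∀ θ : ℝ, η 1 θ / η 0 θ = Real.exp (c + θ - lam (d + θ)) := by
    intro θ
    rw [hη1 0 θ, hη0 θ, one_sub_logistic]
    have hL : logistic (c + θ) ≠ 0 := (logistic_pos _).ne'
    have he : Real.exp (-(c + θ)) ≠ 0 := (Real.exp_pos _).ne'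
    simp only [pow_zero, mul_one, Nat.factorial_zero, Nat.cast_one, div_one]
    rw [div_eq_iff (by positivity : Real.exp (-(c+θ)) * logistic (c+θ) ≠ 0)]
    rw [show Real.exp (c + θ - lam (d+θ)) * (Real.exp (-(c+θ)) * logistic (c+θ))
        = (Real.exp (c + θ - lam (d+θ)) * Real.exp (-(c+θ))) * logistic (c+θ) by ring,
      ← Real.exp_add]
    ring_nf
  have ratioS : ∀ (y : ℕ) (θ : ℝ),
      η (y + 1 + 1) θ / η (y + 1) θ = lam (d + θ) / (y + 1) := by
    intro y θ
    rw [hη1 (y+1) θ, hη1 y θ]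
    have hL : logistic (c + θ) ≠ 0 := (logistic_pos _).ne'
    have he : Real.exp (-(lam (d + θ))) ≠ 0 := (Real.exp_pos _).ne'
    have hlp : lam (d + θ) ≠ 0 := (hpos _).ne'
    have hf : (Nat.factorial y : ℝ) ≠ 0 := by positivity
    have hf1 : (Nat.factorial (y+1) : ℝ) ≠ 0 := by positivity
    rw [Nat.factorial_succ]
    push_cast
    field_simp
    ring
  have hmono : ∀ y : ℕ, Monotone (fun θ : ℝ => η (y + 1) θ / η y θ) := by
    intro y
    cases y with
    | zero =>
      intro a b hab
      simp only [Nat.zero_add, ratio0]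
      exact Real.exp_le_exp.mpr (gmono hab)
    | succ n =>
      intro a b hab
      simp only [ratioS]
      gcongr
      exact lam_mono (by linarith)
  refine ⟨hmono, ?_⟩
  intro y y' θ θ' hy hθ
  have fmono : Monotone (fun n : ℕ => η n θ' / η n θ) := by
    apply monotone_nat_of_le_succ
    intro n
    rw [div_le_div_iff₀ (ηpos n θ) (ηpos (n+1) θ)]
    have h := (div_le_div_iff₀ (ηpos n θ) (ηpos n θ')).mp (hmono n hθ)
    linarith [h]
  have h := fmono hy
  have h2 := (div_le_div_iff₀ (ηpos y θ) (ηpos y' θ)).mp h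
  simp only [ge_iff_le]
  linarith [h2]
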